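/- Let A ∈ ℝ^{m×n} and λ > 0. If the sum of the singular values of A (its nuclear norm) is at most λ, then X = 0 is the unique minimizer over X ∈ ℝ^{m×n} of the function (1/2)‖A − X‖_F² + λ‖X‖₂. -/

import Mathlib

open Matrix RealInnerProductSpace

/-- The spectral norm (largest singular value) of a real matrix, defined as the
operator norm of the induced linear map between Euclidean spaces. -/
noncomputable def matrixSpectralNorm {m n : ℕ} (A : Matrix (Fin m) (Fin n) ℝ) : ℝ :=
  ‖LinearMap.toContinuousLinearMap (Matrix.toEuclideanLin A)‖

/-- The Frobenius norm of a real matrix. -/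
noncomputable def frobNorm {m n : ℕ} (A : Matrix (Fin m) (Fin n) ℝ) : ℝ :=
  Real.sqrt (∑ i, ∑ j, (A i j) ^ 2)

lemma frobNorm_sq {m n : ℕ} (A : Matrix (Fin m) (Fin n) ℝ) :
    frobNorm A ^ 2 = ∑ i, ∑ j, (A i j) ^ 2 := by
  apply Real.sq_sqrt; positivity

lemma matrixSpectralNorm_zero {m n : ℕ} : matrixSpectralNorm (0 : Matrix (Fin m) (Fin n) ℝ) = 0 := by
  simp [matrixSpectralNorm, map_zero]

lemma norm_mulVec_le {m n : ℕ} (X : Matrix (Fin m) (Fin n) ℝ)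
    (w : EuclideanSpace ℝ (Fin n)) :
    ‖Matrix.toEuclideanLin X w‖ ≤ matrixSpectralNorm X * ‖w‖ :=
  (LinearMap.toContinuousLinearMap (Matrix.toEuclideanLin X)).le_opNorm w

/-- If the nuclear norm of `A` (the sum of its singular values, i.e. of the square roots of
the eigenvalues of `AᵀA`) is at most `λ`, then `X = 0` is the unique minimizer of
`X ↦ (1/2)‖A - X‖_F² + λ‖X‖₂`. -/
theorem prox_spectralNorm_eq_zero_of_nuclearNorm_le (m n : ℕ)
    (A : Matrix (Fin m) (Fin n) ℝ) (lam : ℝ) (hlam : 0 < lam)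
    (hH : (Aᵀ * A).IsHermitian)
    (hnuc : ∑ i, Real.sqrt (hH.eigenvalues i) ≤ lam) :
    ∀ X : Matrix (Fin m) (Fin n) ℝ, X ≠ 0 →
      (1 / 2) * frobNorm (A - 0) ^ 2 + lam * matrixSpectralNorm (0 : Matrix (Fin m) (Fin n) ℝ)
        < (1 / 2) * frobNorm (A - X) ^ 2 + lam * matrixSpectralNorm X := by
  intro X hX
  set v : Fin n → EuclideanSpace ℝ (Fin n) := fun k => hH.eigenvectorBasis k with hv
  set U : Matrix (Fin n) (Fin n) ℝ := (hH.eigenvectorUnitary : Matrix (Fin n) (Fin n) ℝ)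
    with hU
  have hUcol : ∀ k i, U i k = v k i := fun k i => hH.eigenvectorUnitary_apply i k
  have hUU : U * Uᵀ = 1 := by
    have := Matrix.mem_unitaryGroup_iff.mp hH.eigenvectorUnitary.2
    simpa [Matrix.star_eq_conjTranspose, Matrix.conjTranspose_eq_transpose_of_trivial] using this
  have hnv : ∀ k, ‖v k‖ = 1 := fun k => hH.eigenvectorBasis.orthonormal.1 k
  have hvv : ∀ k, (v k) ⬝ᵥ (v k) = 1 := by
    intro k
    have h2 : ⟪v k, v k⟫ = (1:ℝ) := by
      rw [real_inner_self_eq_norm_sq, hnv k]; norm_num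
    rw [← h2]
    simp only [PiLp.inner_apply, RCLike.inner_apply, conj_trivial, dotProduct]
  have hAv : ∀ k, ‖Matrix.toEuclideanLin A (v k)‖ = Real.sqrt (hH.eigenvalues k) := by
    intro k
    have hdot : (A *ᵥ (v k)) ⬝ᵥ (A *ᵥ (v k)) = hH.eigenvalues k := by
      have h1 : (A *ᵥ (v k)) ⬝ᵥ (A *ᵥ (v k))
          = (v k) ⬝ᵥ ((Aᵀ * A) *ᵥ (v k)) := by
        conv_rhs => rw [← Matrix.mulVec_mulVec, Matrix.dotProduct_mulVec,
          Matrix.vecMul_transpose]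
      have hm : ((Aᵀ * A) *ᵥ (v k) : Fin n → ℝ) = hH.eigenvalues k • (v k : Fin n → ℝ) :=
        hH.mulVec_eigenvectorBasis k
      rw [h1, hm, dotProduct_smul, hvv k, smul_eq_mul, mul_one]
    have hnormsq : ‖Matrix.toEuclideanLin A (v k)‖ ^ 2 = hH.eigenvalues k := by
      rw [EuclideanSpace.norm_eq, Real.sq_sqrt (by positivity), ← hdot]
      simp [Matrix.toEuclideanLin_apply, dotProduct, sq, Real.norm_eq_abs, abs_mul_abs_self]
    rw [← hnormsq, Real.sqrt_sq (norm_nonneg _)]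
  have hpar : ∑ i, ∑ j, A i j * X i j
      = ∑ k, (A *ᵥ (v k)) ⬝ᵥ (X *ᵥ (v k)) := by
    have h1 : ∀ k, (A *ᵥ (v k)) ⬝ᵥ (X *ᵥ (v k))
        = ((A * U)ᵀ * (X * U)) k k := by
      intro k
      simp only [Matrix.mul_apply, Matrix.transpose_apply, Matrix.mulVec, dotProduct, hUcol]
    have htr : Matrix.trace ((A * U)ᵀ * (X * U)) = Matrix.trace (Aᵀ * X) := by
      rw [Matrix.transpose_mul, Matrix.mul_assoc, ← Matrix.mul_assoc Aᵀ X U,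
        Matrix.trace_mul_comm, Matrix.mul_assoc (Aᵀ * X) U Uᵀ, hUU, Matrix.mul_one]
    calc ∑ i, ∑ j, A i j * X i j = Matrix.trace (Aᵀ * X) := by
          rw [Matrix.trace, Finset.sum_comm]
          apply Finset.sum_congr rfl
          intro j _
          simp [Matrix.mul_apply, Matrix.diag]
      _ = Matrix.trace ((A * U)ᵀ * (X * U)) := htr.symm
      _ = ∑ k, ((A * U)ᵀ * (X * U)) k k := rfl
      _ = ∑ k, (A *ᵥ (v k)) ⬝ᵥ (X *ᵥ (v k)) :=
          Finset.sum_congr rfl fun k _ => (h1 k).symm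
  have hCS : ∑ i, ∑ j, A i j * X i j ≤ lam * matrixSpectralNorm X := by
    rw [hpar]
    have hk : ∀ k, (A *ᵥ (v k)) ⬝ᵥ (X *ᵥ (v k))
        ≤ Real.sqrt (hH.eigenvalues k) * matrixSpectralNorm X := by
      intro k
      have hinner : (A *ᵥ (v k)) ⬝ᵥ (X *ᵥ (v k))
          = ⟪Matrix.toEuclideanLin A (v k), Matrix.toEuclideanLin X (v k)⟫ := by
        simp [PiLp.inner_apply, RCLike.inner_apply, Matrix.toEuclideanLin_apply, dotProduct]
        exact Finset.sum_congr rfl fun _ _ => mul_comm _ _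
      rw [hinner]
      calc ⟪Matrix.toEuclideanLin A (v k), Matrix.toEuclideanLin X (v k)⟫
          ≤ ‖Matrix.toEuclideanLin A (v k)‖ * ‖Matrix.toEuclideanLin X (v k)‖ :=
            real_inner_le_norm _ _
        _ ≤ Real.sqrt (hH.eigenvalues k) * matrixSpectralNorm X := by
            rw [hAv k]
            apply mul_le_mul_of_nonneg_left _ (Real.sqrt_nonneg _)
            have := norm_mulVec_le X (v k)
            rwa [hnv k, mul_one] at this
    calc ∑ k, (A *ᵥ (v k)) ⬝ᵥ (X *ᵥ (v k))
        ≤ ∑ k, Real.sqrt (hH.eigenvalues k) * matrixSpectralNorm X :=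
          Finset.sum_le_sum fun k _ => hk k
      _ = (∑ k, Real.sqrt (hH.eigenvalues k)) * matrixSpectralNorm X := (Finset.sum_mul _ _ _).symm
      _ ≤ lam * matrixSpectralNorm X := by
          apply mul_le_mul_of_nonneg_right hnuc (norm_nonneg _)
  have hSX : 0 < ∑ i, ∑ j, X i j ^ 2 := by
    rcases (lt_or_eq_of_le (by positivity : (0:ℝ) ≤ ∑ i, ∑ j, X i j ^ 2)) with h | h
    · exact h
    · exfalso; apply hX
      ext i j
      have h1 := (Finset.sum_eq_zero_iff_of_nonneg
        (fun i _ => by positivity)).mp h.symm i (Finset.mem_univ i)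
      have h2 := (Finset.sum_eq_zero_iff_of_nonneg
        (fun j _ => by positivity)).mp h1 j (Finset.mem_univ j)
      simpa using pow_eq_zero_iff (n := 2) (by norm_num) |>.mp h2
  have hexp : ∑ i, ∑ j, ((A - X) i j) ^ 2
      = (∑ i, ∑ j, (A i j) ^ 2) - 2 * (∑ i, ∑ j, A i j * X i j) + ∑ i, ∑ j, (X i j) ^ 2 := by
    have h : ∀ i j, (A i j - X i j) ^ 2
        = A i j ^ 2 - 2 * (A i j * X i j) + X i j ^ 2 := fun i j => by ring
    simp only [Matrix.sub_apply, h, Finset.sum_add_distrib, Finset.sum_sub_distrib]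
    rw [show (2:ℝ) * ∑ i, ∑ j, A i j * X i j = ∑ i, ∑ j, 2 * (A i j * X i j) by
      rw [Finset.mul_sum]; exact Finset.sum_congr rfl fun i _ => Finset.mul_sum _ _ _]
  rw [sub_zero, matrixSpectralNorm_zero, frobNorm_sq, frobNorm_sq, hexp, mul_zero]
  nlinarith [hCS, hSX]
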